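/- Let 1 ≤ k ≤ n with k < n−k+1, and let J_{k,n} = ⟨ x_i x_{i+1} ⋯ x_{i+k−1} : 1 ≤ i ≤ n−k+1 ⟩ ⊆ k[x_1,…,x_n] be the consecutive k-out-of-n ideal. Then C_i(J_{k,n}) = {i, i+1, …, k} for 1 ≤ i ≤ k, C_i(J_{k,n}) = {i} for k+1 ≤ i ≤ n−k, and C_i(J_{k,n}) = {n−k+1, …, i} for n−k+1 ≤ i ≤ n. -/

import Mathlib

open MvPolynomial

/-- The squarefree monomial with support `s`: `∏_{j ∈ s} x_j`. -/
noncomputable def sfMon (𝕜 : Type) [Field 𝕜] {σ : Type} (s : Finset σ) : MvPolynomial σ 𝕜 :=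
  ∏ j ∈ s, X j

/-- The supports of the minimal monomial generating set `G(I)` of a squarefree monomial
ideal `I`: supports `s` of squarefree monomials in `I` no proper (squarefree) divisor of which
lies in `I`. -/
def sqfreeMinGens {𝕜 : Type} [Field 𝕜] {σ : Type} (I : Ideal (MvPolynomial σ 𝕜)) :
    Set (Finset σ) :=
  { s | sfMon 𝕜 s ∈ I ∧ ∀ t : Finset σ, t ⊂ s → sfMon 𝕜 t ∉ I }

/-- `C_i(I) = ⋂ { supp m : m ∈ G(I), x_i ∣ m }`. -/
def suppC {𝕜 : Type} [Field 𝕜] {σ : Type} (I : Ideal (MvPolynomial σ 𝕜)) (i : σ) : Set σ :=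
  ⋂ s ∈ { s | s ∈ sqfreeMinGens I ∧ i ∈ s }, (s : Set σ)

section Aux

variable {𝕜 : Type} [Field 𝕜] {σ : Type} [DecidableEq σ]

noncomputable def auxInd (s : Finset σ) : σ →₀ ℕ := ∑ j ∈ s, Finsupp.single j 1

lemma aux_sfMon_eq (s : Finset σ) : sfMon 𝕜 s = monomial (auxInd s) 1 := by
  classical
  induction s using Finset.induction with
  | empty => simp [sfMon, auxInd]
  | insert _ _ h ih =>
      rw [sfMon, Finset.prod_insert h, ← sfMon, ih, X, monomial_mul, one_mul]
      congr 1
      rw [auxInd, auxInd, Finset.sum_insert h]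

lemma aux_ind_apply (s : Finset σ) (i : σ) : auxInd s i = if i ∈ s then 1 else 0 := by
  classical
  simp [auxInd, Finsupp.finset_sum_apply, Finsupp.single_apply]

lemma aux_ind_le_iff {s t : Finset σ} : auxInd s ≤ auxInd t ↔ s ⊆ t := by
  constructor
  · intro h i hi
    have := h i
    rw [aux_ind_apply, aux_ind_apply, if_pos hi] at this
    by_contra hc
    rw [if_neg hc] at this; omega
  · intro h i
    rw [aux_ind_apply, aux_ind_apply]
    split
    · rw [if_pos (h (by assumption))]
    · positivity

lemma aux_sfMon_mem_span {S : Set (Finset σ)} {s : Finset σ} :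
    sfMon 𝕜 s ∈ Ideal.span ((fun t => sfMon 𝕜 t) '' S) ↔ ∃ t ∈ S, t ⊆ s := by
  have h1 : ((fun t => sfMon 𝕜 t) '' S) = ((fun d => monomial d (1:𝕜)) '' (auxInd '' S)) := by
    rw [Set.image_image]; exact Set.image_congr fun t _ => aux_sfMon_eq t
  rw [aux_sfMon_eq, h1, mem_ideal_span_monomial_image]
  classical
  rw [support_monomial, if_neg (one_ne_zero (α := 𝕜))]
  simp only [Finset.mem_singleton]
  constructor
  · intro h
    obtain ⟨si, hsi, hle⟩ := h (auxInd s) rfl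
    obtain ⟨t, ht, rfl⟩ := hsi
    exact ⟨t, ht, aux_ind_le_iff.mp hle⟩
  · rintro ⟨t, ht, hsub⟩ xi rfl
    exact ⟨auxInd t, ⟨t, ht, rfl⟩, aux_ind_le_iff.mpr hsub⟩

end Aux

theorem stmt13 {𝕜 : Type} [Field 𝕜] (n k : ℕ) (hk : 1 ≤ k) (hkn : k ≤ n)
    (hcase : k < n - k + 1)
    (J : Ideal (MvPolynomial (Fin n) 𝕜))
    (hJ : J = Ideal.span { f | ∃ i : ℕ, 1 ≤ i ∧ i ≤ n - k + 1 ∧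
      f = sfMon 𝕜 (Finset.univ.filter
        (fun t : Fin n => i ≤ t.val + 1 ∧ t.val + 1 < i + k)) }) :
    ∀ t : Fin n,
      (t.val + 1 ≤ k →
        suppC J t = { u : Fin n | t.val ≤ u.val ∧ u.val + 1 ≤ k }) ∧
      (k + 1 ≤ t.val + 1 → t.val + 1 ≤ n - k →
        suppC J t = {t}) ∧
      (n - k + 1 ≤ t.val + 1 →
        suppC J t = { u : Fin n | n - k ≤ u.val ∧ u.val ≤ t.val }) := by
  classical
  set Itv : ℕ → Finset (Fin n) := fun i => Finset.univ.filter
      (fun t : Fin n => i ≤ t.val + 1 ∧ t.val + 1 < i + k) with hItv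
  have hmemItv : ∀ i (u : Fin n), u ∈ Itv i ↔ (i ≤ u.val + 1 ∧ u.val + 1 < i + k) := by
    intro i u; simp [hItv]
  -- rewrite span set as an image
  have hS : { f | ∃ i : ℕ, 1 ≤ i ∧ i ≤ n - k + 1 ∧ f = sfMon 𝕜 (Itv i) }
      = (fun s => sfMon 𝕜 s) '' { s | ∃ i, 1 ≤ i ∧ i ≤ n - k + 1 ∧ s = Itv i } := by
    ext f
    constructor
    · rintro ⟨i, h1, h2, rfl⟩; exact ⟨Itv i, ⟨i, h1, h2, rfl⟩, rfl⟩
    · rintro ⟨s, ⟨i, h1, h2, rfl⟩, rfl⟩; exact ⟨i, h1, h2, rfl⟩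
  rw [hS] at hJ
  have hmem : ∀ s : Finset (Fin n),
      sfMon 𝕜 s ∈ J ↔ ∃ i, 1 ≤ i ∧ i ≤ n - k + 1 ∧ Itv i ⊆ s := by
    intro s
    rw [hJ, aux_sfMon_mem_span]
    constructor
    · rintro ⟨u, ⟨i, h1, h2, rfl⟩, hsub⟩; exact ⟨i, h1, h2, hsub⟩
    · rintro ⟨i, h1, h2, hsub⟩; exact ⟨Itv i, ⟨i, h1, h2, rfl⟩, hsub⟩
  have hinj : ∀ i j, 1 ≤ i → i ≤ n - k + 1 → 1 ≤ j → j ≤ n - k + 1 →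
      Itv i ⊆ Itv j → i = j := by
    intro i j hi1 hi2 hj1 hj2 hsub
    have ha : i - 1 < n := by omega
    have hb : i + k - 2 < n := by omega
    have h1 := (hmemItv j ⟨i - 1, ha⟩).mp (hsub ((hmemItv i ⟨i - 1, ha⟩).mpr (by simp; omega)))
    have h2 := (hmemItv j ⟨i + k - 2, hb⟩).mp
      (hsub ((hmemItv i ⟨i + k - 2, hb⟩).mpr (by simp; omega)))
    simp only at h1 h2
    omega
  have hGens : ∀ s : Finset (Fin n),
      s ∈ sqfreeMinGens J ↔ ∃ i, 1 ≤ i ∧ i ≤ n - k + 1 ∧ s = Itv i := by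
    intro s
    constructor
    · rintro ⟨hmem', hmin⟩
      obtain ⟨i, h1, h2, hsub⟩ := (hmem s).mp hmem'
      refine ⟨i, h1, h2, ?_⟩
      by_contra hne
      exact hmin (Itv i) (hsub.ssubset_of_ne (fun h => hne h.symm))
        ((hmem (Itv i)).mpr ⟨i, h1, h2, subset_refl _⟩)
    · rintro ⟨i, h1, h2, rfl⟩
      refine ⟨(hmem (Itv i)).mpr ⟨i, h1, h2, subset_refl _⟩, ?_⟩
      intro u husub humem
      obtain ⟨j, hj1, hj2, hjsub⟩ := (hmem u).mp humem
      have hji : j = i := hinj j i hj1 hj2 h1 h2 (hjsub.trans husub.subset)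
      exact husub.not_subset (hji ▸ hjsub)
  intro t
  have hsupp : ∀ u : Fin n, u ∈ suppC J t ↔
      ∀ i, 1 ≤ i → i ≤ n - k + 1 → i ≤ t.val + 1 → t.val + 1 < i + k →
        (i ≤ u.val + 1 ∧ u.val + 1 < i + k) := by
    intro u
    unfold suppC
    simp only [Set.mem_iInter, Set.mem_setOf_eq, Finset.mem_coe]
    constructor
    · intro h i h1 h2 h3 h4
      exact (hmemItv i u).mp (h (Itv i) ⟨(hGens (Itv i)).mpr ⟨i, h1, h2, rfl⟩,
        (hmemItv i t).mpr ⟨h3, h4⟩⟩)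
    · rintro h s ⟨hsg, hts⟩
      obtain ⟨i, h1, h2, rfl⟩ := (hGens s).mp hsg
      have ht := (hmemItv i t).mp hts
      exact (hmemItv i u).mpr (h i h1 h2 ht.1 ht.2)
  have htlt := t.isLt
  refine ⟨?_, ?_, ?_⟩
  · intro hc
    ext u
    rw [Set.mem_setOf_eq, hsupp u]
    have hult := u.isLt
    constructor
    · intro h
      have h1 := h 1 (by omega) (by omega) (by omega) (by omega)
      have h2 := h (t.val + 1) (by omega) (by omega) (by omega) (by omega)
      omega
    · intro h i h1 h2 h3 h4
      omega
  · intro hc1 hc2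
    ext u
    rw [Set.mem_singleton_iff, hsupp u]
    have hult := u.isLt
    constructor
    · intro h
      have h1 := h (t.val + 1) (by omega) (by omega) (by omega) (by omega)
      have h2 := h (t.val + 2 - k) (by omega) (by omega) (by omega) (by omega)
      exact Fin.ext (by omega)
    · rintro rfl i h1 h2 h3 h4
      exact ⟨h3, h4⟩
  · intro hc
    ext u
    rw [Set.mem_setOf_eq, hsupp u]
    have hult := u.isLt
    constructor
    · intro h
      have h1 := h (n - k + 1) (by omega) (by omega) (by omega) (by omega)
      have h2 := h (t.val + 2 - k) (by omega) (by omega) (by omega) (by omega)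
      omega
    · intro h i h1 h2 h3 h4
      omega
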